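/- Let z₁, z₂, z₃ be pairwise distinct complex numbers. Then j(z₁, z₂, z₃) is real if and only if there exist a, b ∈ ℂ with a ≠ 0 such that the anti-holomorphic affine map z ↦ a·conj(z) + b carries the set {z₁, z₂, z₃} onto itself; i.e., the j-invariant is real exactly when the triple has a mirror symmetry. -/

import Mathlib

open Complex

/-- The j-invariant as a function of the cross-ratio. -/
noncomputable def Jfun (l : ℂ) : ℂ := 4 * (l ^ 2 - l + 1) ^ 3 / (27 * l ^ 2 * (l - 1) ^ 2)

/-- The cross-ratio of four points of `ℂ`. -/
noncomputable def crossRatio (z1 z2 z3 z4 : ℂ) : ℂ :=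
  ((z1 - z3) / (z2 - z3)) * ((z2 - z4) / (z1 - z4))

/-- The j-invariant of a quadruple of points of `ℂ`. -/
noncomputable def jInv4 (z1 z2 z3 z4 : ℂ) : ℂ := Jfun (crossRatio z1 z2 z3 z4)

/-- The j-invariant of a triple of points of `ℂ` (fourth point at infinity). -/
noncomputable def jInv3 (z1 z2 z3 : ℂ) : ℂ := Jfun ((z1 - z3) / (z2 - z3))

lemma Jfun_conj (l : ℂ) : Jfun ((starRingEnd ℂ) l) = (starRingEnd ℂ) (Jfun l) := by
  simp [Jfun, map_div₀, map_mul, map_pow, map_sub, map_add, map_one, map_ofNat]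

lemma Jfun_one_sub (l : ℂ) : Jfun (1 - l) = Jfun l := by
  unfold Jfun; congr 1 <;> ring

lemma Jfun_denom_ne (l : ℂ) (h0 : l ≠ 0) (h1 : l ≠ 1) : 27 * l ^ 2 * (l - 1) ^ 2 ≠ 0 :=
  mul_ne_zero (mul_ne_zero (by norm_num) (pow_ne_zero _ h0)) (pow_ne_zero _ (sub_ne_zero.mpr h1))

lemma Jfun_inv (l : ℂ) : Jfun (1 / l) = Jfun l := by
  by_cases h0 : l = 0
  · simp [h0]
  by_cases h1 : l = 1
  · simp [h1]
  have h0' : (1:ℂ)/l ≠ 0 := one_div_ne_zero h0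
  have h1' : (1:ℂ)/l ≠ 1 := by
    intro h
    rw [div_eq_iff h0, one_mul] at h
    exact h1 h.symm
  rw [Jfun, Jfun, div_eq_div_iff (Jfun_denom_ne _ h0' h1') (Jfun_denom_ne _ h0 h1)]
  field_simp
  ring

lemma fiber (l m : ℂ) (hl0 : l ≠ 0) (hl1 : l ≠ 1) (hm0 : m ≠ 0) (hm1 : m ≠ 1)
    (h : Jfun m = Jfun l) :
    m = l ∨ m = 1 - l ∨ m = 1 / l ∨ m = 1 / (1 - l) ∨ m = l / (l - 1) ∨ m = (l - 1) / l := by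
  have hl1' : l - 1 ≠ 0 := sub_ne_zero.mpr hl1
  have hl1'' : (1:ℂ) - l ≠ 0 := fun h => hl1' (by linear_combination -h)
  rw [Jfun, Jfun, div_eq_div_iff (Jfun_denom_ne _ hm0 hm1) (Jfun_denom_ne _ hl0 hl1)] at h
  have hfact : (m - l) * (m - (1 - l)) * (l * m - 1) * ((1 - l) * m - 1) *
      ((l - 1) * m - l) * (l * m - (l - 1)) = 0 := by
    linear_combination (-1/108 : ℂ) * h
  rcases mul_eq_zero.mp hfact with h' | h'
  rotate_left
  · right; right; right; right; right
    rw [eq_div_iff hl0]; linear_combination h'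
  rcases mul_eq_zero.mp h' with h' | h'
  rotate_left
  · right; right; right; right; left
    rw [eq_div_iff hl1']; linear_combination h'
  rcases mul_eq_zero.mp h' with h' | h'
  rotate_left
  · right; right; right; left
    rw [eq_div_iff hl1'']; linear_combination h'
  rcases mul_eq_zero.mp h' with h' | h'
  rotate_left
  · right; right; left
    rw [eq_div_iff hl0]; linear_combination h'
  rcases mul_eq_zero.mp h' with h' | h'
  · left; linear_combination h'
  · right; left; linear_combination h'

lemma exists_map (z1 z2 z3 w1 w2 w3 : ℂ) (h12 : z1 ≠ z2) (hw12 : w1 ≠ w2)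
    (hcr : (w1 - w3) * ((starRingEnd ℂ) z2 - (starRingEnd ℂ) z3)
         = (w2 - w3) * ((starRingEnd ℂ) z1 - (starRingEnd ℂ) z3)) :
    ∃ a b : ℂ, a ≠ 0 ∧ a * (starRingEnd ℂ) z1 + b = w1 ∧
      a * (starRingEnd ℂ) z2 + b = w2 ∧ a * (starRingEnd ℂ) z3 + b = w3 := by
  have hz : (starRingEnd ℂ) z1 - (starRingEnd ℂ) z2 ≠ 0 := by
    rw [← map_sub, map_ne_zero]; exact sub_ne_zero.mpr h12
  refine ⟨(w1 - w2) / ((starRingEnd ℂ) z1 - (starRingEnd ℂ) z2),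
    w1 - (w1 - w2) / ((starRingEnd ℂ) z1 - (starRingEnd ℂ) z2) * (starRingEnd ℂ) z1,
    div_ne_zero (sub_ne_zero.mpr hw12) hz, by ring, ?_, ?_⟩
  · field_simp
    ring
  · field_simp
    linear_combination -hcr

lemma jInv3_affine (a b u v w : ℂ) (ha : a ≠ 0) :
    jInv3 (a * u + b) (a * v + b) (a * w + b) = jInv3 u v w := by
  unfold jInv3
  rw [show a * u + b - (a * w + b) = a * (u - w) by ring,
      show a * v + b - (a * w + b) = a * (v - w) by ring,
      mul_div_mul_left _ _ ha]

lemma jInv3_conj (u v w : ℂ) :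
    jInv3 ((starRingEnd ℂ) u) ((starRingEnd ℂ) v) ((starRingEnd ℂ) w)
      = (starRingEnd ℂ) (jInv3 u v w) := by
  unfold jInv3
  rw [← map_sub, ← map_sub, ← map_div₀, Jfun_conj]

lemma jInv3_swap12 (z1 z2 z3 : ℂ) :
    jInv3 z2 z1 z3 = jInv3 z1 z2 z3 := by
  unfold jInv3
  rw [show (z2 - z3) / (z1 - z3) = 1 / ((z1 - z3) / (z2 - z3)) by rw [one_div_div],
      Jfun_inv]

lemma jInv3_swap23 (z1 z2 z3 : ℂ) (h23 : z2 ≠ z3) :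
    jInv3 z1 z3 z2 = jInv3 z1 z2 z3 := by
  unfold jInv3
  have h : z2 - z3 ≠ 0 := sub_ne_zero.mpr h23
  have h' : z3 - z2 ≠ 0 := sub_ne_zero.mpr h23.symm
  rw [show (z1 - z2) / (z3 - z2) = 1 - (z1 - z3) / (z2 - z3) by field_simp; ring,
      Jfun_one_sub]

lemma jInv3_perm_all (z1 z2 z3 : ℂ) (h12 : z1 ≠ z2) (h13 : z1 ≠ z3) (h23 : z2 ≠ z3) :
    jInv3 z2 z1 z3 = jInv3 z1 z2 z3 ∧ jInv3 z1 z3 z2 = jInv3 z1 z2 z3 ∧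
    jInv3 z3 z2 z1 = jInv3 z1 z2 z3 ∧ jInv3 z2 z3 z1 = jInv3 z1 z2 z3 ∧
    jInv3 z3 z1 z2 = jInv3 z1 z2 z3 := by
  have A : jInv3 z2 z1 z3 = jInv3 z1 z2 z3 := jInv3_swap12 z1 z2 z3
  have B : jInv3 z1 z3 z2 = jInv3 z1 z2 z3 := jInv3_swap23 z1 z2 z3 h23
  have D : jInv3 z2 z3 z1 = jInv3 z1 z2 z3 := (jInv3_swap23 z2 z1 z3 h13).trans A
  have C : jInv3 z3 z2 z1 = jInv3 z1 z2 z3 := (jInv3_swap12 z2 z3 z1).trans D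
  have E : jInv3 z3 z1 z2 = jInv3 z1 z2 z3 := (jInv3_swap12 z1 z3 z2).trans B
  exact ⟨A, B, C, D, E⟩

lemma image_triple (a b z1 z2 z3 w1 w2 w3 : ℂ)
    (e1 : a * (starRingEnd ℂ) z1 + b = w1) (e2 : a * (starRingEnd ℂ) z2 + b = w2)
    (e3 : a * (starRingEnd ℂ) z3 + b = w3)
    (hset : ({w1, w2, w3} : Set ℂ) = {z1, z2, z3}) :
    (fun z => a * (starRingEnd ℂ) z + b) '' ({z1, z2, z3} : Set ℂ) =
      ({z1, z2, z3} : Set ℂ) := by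
  rw [Set.image_insert_eq, Set.image_insert_eq, Set.image_singleton]
  simp only [e1, e2, e3]
  exact hset

theorem jInv3_real_iff_mirror_symmetry (z1 z2 z3 : ℂ)
    (h12 : z1 ≠ z2) (h13 : z1 ≠ z3) (h23 : z2 ≠ z3) :
    (jInv3 z1 z2 z3).im = 0 ↔
      ∃ a b : ℂ, a ≠ 0 ∧
        (fun z => a * (starRingEnd ℂ) z + b) '' ({z1, z2, z3} : Set ℂ) =
          ({z1, z2, z3} : Set ℂ) := by
  have ht1 : z1 - z3 ≠ 0 := sub_ne_zero.mpr h13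
  have ht2 : z2 - z3 ≠ 0 := sub_ne_zero.mpr h23
  have ht12 : z1 - z2 ≠ 0 := sub_ne_zero.mpr h12
  have hs1 : (starRingEnd ℂ) z1 - (starRingEnd ℂ) z3 ≠ 0 := by
    rw [← map_sub, map_ne_zero]; exact ht1
  have hs2 : (starRingEnd ℂ) z2 - (starRingEnd ℂ) z3 ≠ 0 := by
    rw [← map_sub, map_ne_zero]; exact ht2
  have hL0 : (z1 - z3) / (z2 - z3) ≠ 0 := div_ne_zero ht1 ht2
  have hL1 : (z1 - z3) / (z2 - z3) ≠ 1 := by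
    intro h
    rw [div_eq_one_iff_eq ht2] at h
    exact h12 (by linear_combination h)
  have hcL : (starRingEnd ℂ) ((z1 - z3) / (z2 - z3)) =
      ((starRingEnd ℂ) z1 - (starRingEnd ℂ) z3) / ((starRingEnd ℂ) z2 - (starRingEnd ℂ) z3) := by
    rw [map_div₀, map_sub, map_sub]
  constructor
  · intro hIm
    have hc0 : (starRingEnd ℂ) ((z1 - z3) / (z2 - z3)) ≠ 0 := by
      rw [map_ne_zero]; exact hL0
    have hc1 : (starRingEnd ℂ) ((z1 - z3) / (z2 - z3)) ≠ 1 := by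
      intro h; apply hL1
      have := congrArg (starRingEnd ℂ) h; simpa using this
    have hJ : Jfun ((starRingEnd ℂ) ((z1 - z3) / (z2 - z3))) = Jfun ((z1 - z3) / (z2 - z3)) := by
      rw [Jfun_conj]
      exact Complex.conj_eq_iff_im.mpr hIm
    rcases fiber _ _ hL0 hL1 hc0 hc1 hJ with h' | h' | h' | h' | h' | h'
    · -- identity
      rw [hcL, div_eq_div_iff hs2 ht2] at h'
      obtain ⟨a, b, ha, e1, e2, e3⟩ := exists_map z1 z2 z3 z1 z2 z3 h12 h12
        (by linear_combination -h')
      exact ⟨a, b, ha, image_triple a b z1 z2 z3 z1 z2 z3 e1 e2 e3 rfl⟩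
    · -- 1 - λ : swap z2 z3
      rw [hcL, show (1:ℂ) - (z1 - z3) / (z2 - z3) = (z2 - z1) / (z2 - z3) by
        field_simp; ring, div_eq_div_iff hs2 ht2] at h'
      obtain ⟨a, b, ha, e1, e2, e3⟩ := exists_map z1 z2 z3 z1 z3 z2 h12 h13
        (by linear_combination h')
      refine ⟨a, b, ha, image_triple a b z1 z2 z3 z1 z3 z2 e1 e2 e3 ?_⟩
      ext x; simp only [Set.mem_insert_iff, Set.mem_singleton_iff]; tauto
    · -- 1/λ : swap z1 z2
      rw [hcL, one_div_div, div_eq_div_iff hs2 ht1] at h'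
      obtain ⟨a, b, ha, e1, e2, e3⟩ := exists_map z1 z2 z3 z2 z1 z3 h12 h12.symm
        (by linear_combination -h')
      refine ⟨a, b, ha, image_triple a b z1 z2 z3 z2 z1 z3 e1 e2 e3 ?_⟩
      ext x; simp only [Set.mem_insert_iff, Set.mem_singleton_iff]; tauto
    · -- 1/(1-λ) : cycle (z3, z1, z2)
      rw [hcL, show (1:ℂ) / (1 - (z1 - z3) / (z2 - z3)) = (z2 - z3) / (z2 - z1) by
        rw [show (1:ℂ) - (z1 - z3) / (z2 - z3) = (z2 - z1) / (z2 - z3) by field_simp; ring,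
          one_div_div], div_eq_div_iff hs2 (sub_ne_zero.mpr h12.symm)] at h'
      obtain ⟨a, b, ha, e1, e2, e3⟩ := exists_map z1 z2 z3 z3 z1 z2 h12 h13.symm
        (by linear_combination h')
      refine ⟨a, b, ha, image_triple a b z1 z2 z3 z3 z1 z2 e1 e2 e3 ?_⟩
      ext x; simp only [Set.mem_insert_iff, Set.mem_singleton_iff]; tauto
    · -- λ/(λ-1) : swap z1 z3
      rw [hcL, show (z1 - z3) / (z2 - z3) / ((z1 - z3) / (z2 - z3) - 1) =
          (z1 - z3) / (z1 - z2) by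
        rw [show (z1 - z3) / (z2 - z3) - 1 = (z1 - z2) / (z2 - z3) by field_simp; ring,
          div_div_div_cancel_right₀ ht2], div_eq_div_iff hs2 ht12] at h'
      obtain ⟨a, b, ha, e1, e2, e3⟩ := exists_map z1 z2 z3 z3 z2 z1 h12 h23.symm
        (by linear_combination h')
      refine ⟨a, b, ha, image_triple a b z1 z2 z3 z3 z2 z1 e1 e2 e3 ?_⟩
      ext x; simp only [Set.mem_insert_iff, Set.mem_singleton_iff]; tauto
    · -- (λ-1)/λ : cycle (z2, z3, z1)
      rw [hcL, show ((z1 - z3) / (z2 - z3) - 1) / ((z1 - z3) / (z2 - z3)) =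
          (z1 - z2) / (z1 - z3) by
        rw [show (z1 - z3) / (z2 - z3) - 1 = (z1 - z2) / (z2 - z3) by field_simp; ring,
          div_div_div_cancel_right₀ ht2], div_eq_div_iff hs2 ht1] at h'
      obtain ⟨a, b, ha, e1, e2, e3⟩ := exists_map z1 z2 z3 z2 z3 z1 h12 h23
        (by linear_combination h')
      refine ⟨a, b, ha, image_triple a b z1 z2 z3 z2 z3 z1 e1 e2 e3 ?_⟩
      ext x; simp only [Set.mem_insert_iff, Set.mem_singleton_iff]; tauto
  · rintro ⟨a, b, ha, hset⟩
    have key : ∀ u v : ℂ, a * (starRingEnd ℂ) u + b = a * (starRingEnd ℂ) v + b → u = v := by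
      intro u v h
      have h' : (starRingEnd ℂ) u = (starRingEnd ℂ) v := mul_left_cancel₀ ha (add_right_cancel h)
      have := congrArg (starRingEnd ℂ) h'
      simpa using this
    have hperm := jInv3_perm_all z1 z2 z3 h12 h13 h23
    have hm1 : a * (starRingEnd ℂ) z1 + b ∈ ({z1, z2, z3} : Set ℂ) := by
      rw [← hset]; exact Set.mem_image_of_mem _ (by simp)
    have hm2 : a * (starRingEnd ℂ) z2 + b ∈ ({z1, z2, z3} : Set ℂ) := by
      rw [← hset]; exact Set.mem_image_of_mem _ (by simp)
    have hm3 : a * (starRingEnd ℂ) z3 + b ∈ ({z1, z2, z3} : Set ℂ) := by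
      rw [← hset]; exact Set.mem_image_of_mem _ (by simp)
    simp only [Set.mem_insert_iff, Set.mem_singleton_iff] at hm1 hm2 hm3
    have finish : ∀ w1 w2 w3 : ℂ, a * (starRingEnd ℂ) z1 + b = w1 →
        a * (starRingEnd ℂ) z2 + b = w2 → a * (starRingEnd ℂ) z3 + b = w3 →
        jInv3 w1 w2 w3 = jInv3 z1 z2 z3 → (jInv3 z1 z2 z3).im = 0 := by
      intro w1 w2 w3 e1 e2 e3 hp
      refine Complex.conj_eq_iff_im.mp ?_
      rw [← jInv3_conj, ← jInv3_affine a b ((starRingEnd ℂ) z1) ((starRingEnd ℂ) z2)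
        ((starRingEnd ℂ) z3) ha, e1, e2, e3, hp]
    rcases hm1 with e1 | e1 | e1 <;> rcases hm2 with e2 | e2 | e2 <;>
      rcases hm3 with e3 | e3 | e3
    all_goals try exact absurd (key _ _ (e1.trans e2.symm)) h12
    all_goals try exact absurd (key _ _ (e1.trans e3.symm)) h13
    all_goals try exact absurd (key _ _ (e2.trans e3.symm)) h23
    · exact finish _ _ _ e1 e2 e3 rfl
    · exact finish _ _ _ e1 e2 e3 hperm.2.1
    · exact finish _ _ _ e1 e2 e3 hperm.1
    · exact finish _ _ _ e1 e2 e3 hperm.2.2.2.1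
    · exact finish _ _ _ e1 e2 e3 hperm.2.2.2.2
    · exact finish _ _ _ e1 e2 e3 hperm.2.2.1
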